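/- arXiv:2004.06232 — 2 statements merged into one kernel-verified Lean document; each statement's English description precedes it below -/
import Mathlib

section
/- The double integral ∫₀¹ ∫₀¹ 1/(1+xy) dy dx over the unit square equals (1/2)·ζ(2) = π²/12. -/
open Real MeasureTheory

lemma alt_sum : HasSum (fun n : ℕ => (-1 : ℝ) ^ n / ((n : ℝ) + 1) ^ 2) (π ^ 2 / 12) := by
  have h0 : HasSum (fun n : ℕ => (1 : ℝ) / (n : ℝ) ^ 2) (π ^ 2 / 6) := hasSum_zeta_two
  have h1 : HasSum (fun n : ℕ => (1 : ℝ) / ((n : ℝ) + 1) ^ 2) (π ^ 2 / 6) := by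
    have := (hasSum_nat_add_iff' (f := fun n : ℕ => (1 : ℝ) / (n : ℝ) ^ 2) 1).mpr h0
    simpa using this
  have h4 : HasSum (fun k : ℕ => (1 : ℝ) / ((2 * (k : ℝ) + 1) + 1) ^ 2) (π ^ 2 / 24) := by
    have h := h1.mul_left (1/4)
    have he : (fun k : ℕ => (1:ℝ)/4 * (1 / ((k : ℝ) + 1) ^ 2))
        = (fun k : ℕ => (1 : ℝ) / ((2 * (k : ℝ) + 1) + 1) ^ 2) := by
      funext k
      have : ((k : ℝ) + 1) ^ 2 ≠ 0 := by positivity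
      field_simp
      ring
    rw [he] at h
    convert h using 1
    · rfl
    ring
  set o : ℕ → ℝ := fun n => if Odd n then (1 : ℝ) / ((n : ℝ) + 1) ^ 2 else 0 with ho
  have hinj : Function.Injective (fun k : ℕ => 2 * k + 1) := fun a b h => by
    simpa using h
  have ho4 : HasSum o (π ^ 2 / 24) := by
    rw [← hinj.hasSum_iff]
    · convert h4 using 1
      funext k
      show o (2 * k + 1) = _
      simp only [ho]
      rw [if_pos ⟨k, by ring⟩]
      push_cast
      ring_nf
    · intro n hn
      simp only [Set.mem_range, not_exists] at hn
      simp only [ho]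
      rw [if_neg]
      rintro ⟨k, hk⟩
      exact hn k (by omega)
  have h := h1.sub (ho4.mul_left 2)
  have he : (fun n : ℕ => (1:ℝ) / ((n : ℝ) + 1) ^ 2 - 2 * o n)
      = (fun n : ℕ => (-1 : ℝ) ^ n / ((n : ℝ) + 1) ^ 2) := by
    funext n
    rcases Nat.even_or_odd n with hev | hodd
    · simp only [ho, if_neg (Nat.not_odd_iff_even.mpr hev), hev.neg_one_pow]
      ring
    · simp only [ho, if_pos hodd, hodd.neg_one_pow]
      ring
  rw [he] at h
  convert h using 1
  · rfl
  ring

open Real MeasureTheory intervalIntegral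

lemma sum_sq : HasSum (fun n : ℕ => (1 : ℝ) / ((n : ℝ) + 1) ^ 2) (π ^ 2 / 6) := by
  have := (hasSum_nat_add_iff' (f := fun n : ℕ => (1 : ℝ) / (n : ℝ) ^ 2) 1).mpr hasSum_zeta_two
  simpa using this

lemma pointwise_sum {x : ℝ} (hx : x ∈ Set.Ioo (0:ℝ) 1) :
    HasSum (fun n : ℕ => ((-1 : ℝ) ^ n / ((n : ℝ) + 1)) * x ^ n) (Real.log (1 + x) / x) := by
  obtain ⟨hx0, hx1⟩ := hx
  have habs : |(-x)| < 1 := by rw [abs_neg, abs_of_pos hx0]; exact hx1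
  have h := ((Real.hasSum_pow_div_log_of_abs_lt_one habs).neg).div_const x
  have he : (fun n : ℕ => -((-x) ^ (n + 1) / ((n : ℝ) + 1)) / x)
      = fun n : ℕ => ((-1 : ℝ) ^ n / ((n : ℝ) + 1)) * x ^ n := by
    funext n
    rw [neg_pow]
    have : ((n : ℝ) + 1) ≠ 0 := by positivity
    field_simp
    ring
  rw [he] at h
  simpa [sub_neg_eq_add] using h

lemma outer_int : (∫ x in Set.Ioo (0:ℝ) 1, Real.log (1 + x) / x) = π ^ 2 / 12 := by
  have hpow : ∀ n : ℕ, (∫ x in Set.Ioo (0:ℝ) 1, x ^ n) = 1 / ((n : ℝ) + 1) := by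
    intro n
    rw [← integral_Ioc_eq_integral_Ioo, ← intervalIntegral.integral_of_le zero_le_one,
      integral_pow]
    ring
  set F : ℕ → ℝ → ℝ := fun n x => ((-1 : ℝ) ^ n / ((n : ℝ) + 1)) * x ^ n with hF
  have hFint : ∀ n, Integrable (F n) (volume.restrict (Set.Ioo (0:ℝ) 1)) := by
    intro n
    have hc : Continuous (F n) := by fun_prop
    exact (hc.integrableOn_Icc (a := 0) (b := 1)).mono_set Set.Ioo_subset_Icc_self
  have hFnorm : ∀ n : ℕ, (∫ x in Set.Ioo (0:ℝ) 1, ‖F n x‖)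
      = 1 / ((n : ℝ) + 1) ^ 2 := by
    intro n
    have : ∀ x ∈ Set.Ioo (0:ℝ) 1, ‖F n x‖ = (1 / ((n : ℝ) + 1)) * x ^ n := by
      intro x hx
      simp only [hF, Real.norm_eq_abs, abs_mul, abs_div, abs_pow, abs_neg, abs_one, one_pow,
        abs_of_pos hx.1]
      rw [abs_of_pos (by positivity : (0:ℝ) < (n : ℝ) + 1)]
    rw [setIntegral_congr_fun measurableSet_Ioo this, MeasureTheory.integral_const_mul, hpow]
    have : ((n : ℝ) + 1) ≠ 0 := by positivity
    field_simp
  have hsummable : Summable (fun n : ℕ => ∫ x in Set.Ioo (0:ℝ) 1, ‖F n x‖) := by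
    simp_rw [hFnorm]
    exact sum_sq.summable
  have hkey := integral_tsum_of_summable_integral_norm hFint hsummable
  have hInt : ∀ n : ℕ, (∫ x in Set.Ioo (0:ℝ) 1, F n x)
      = (-1 : ℝ) ^ n / ((n : ℝ) + 1) ^ 2 := by
    intro n
    simp only [hF]
    rw [MeasureTheory.integral_const_mul, hpow]
    have : ((n : ℝ) + 1) ≠ 0 := by positivity
    field_simp
  have hL : (∑' n : ℕ, ∫ x in Set.Ioo (0:ℝ) 1, F n x) = π ^ 2 / 12 := by
    simp_rw [hInt]
    exact alt_sum.tsum_eq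
  rw [← hL, hkey]
  apply setIntegral_congr_fun measurableSet_Ioo
  intro x hx
  exact ((pointwise_sum hx).tsum_eq).symm

lemma inner_int {x : ℝ} (hx : x ∈ Set.Ioo (0:ℝ) 1) :
    (∫ y in Set.Ioo (0:ℝ) 1, 1 / (1 + x * y)) = Real.log (1 + x) / x := by
  obtain ⟨hx0, hx1⟩ := hx
  have key : ∀ y ∈ Set.uIcc (0:ℝ) 1,
      HasDerivAt (fun y => Real.log (1 + x * y) / x) (1 / (1 + x * y)) y := by
    intro y hy
    rw [Set.uIcc_of_le zero_le_one] at hy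
    have hpos : 0 < 1 + x * y := by nlinarith [hy.1]
    have h1 : HasDerivAt (fun y : ℝ => 1 + x * y) x y := by
      simpa using ((hasDerivAt_id y).const_mul x).const_add 1
    have h2 := (Real.hasDerivAt_log hpos.ne').comp y h1
    have h3 := h2.div_const x
    rw [show (1 / (1 + x * y)) = (1 + x * y)⁻¹ * x / x by field_simp [hx0.ne']]
    exact h3
  have hcont : ContinuousOn (fun y : ℝ => 1 / (1 + x * y)) (Set.uIcc 0 1) := by
    apply ContinuousOn.div continuousOn_const (by fun_prop)
    intro y hy
    rw [Set.uIcc_of_le zero_le_one] at hy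
    nlinarith [hy.1]
  have := intervalIntegral.integral_eq_sub_of_hasDerivAt key hcont.intervalIntegrable
  rw [← integral_Ioc_eq_integral_Ioo, ← intervalIntegral.integral_of_le zero_le_one, this]
  simp

theorem unit_square_integral :
    (∫ x in Set.Ioo (0:ℝ) 1, ∫ y in Set.Ioo (0:ℝ) 1, 1 / (1 + x * y))
    = Real.pi ^ 2 / 12 := by
  rw [← outer_int]
  apply setIntegral_congr_fun measurableSet_Ioo
  intro x hx
  exact inner_int hx
end

section
/- 2·Li₂(1/3) − Li₂(−1/3) = π²/6 − (1/2)·(log 3)². -/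
open Real Set

noncomputable def Li (s : ℕ) (w : ℝ) : ℝ := ∑' n : ℕ, w ^ (n + 1) / ((n:ℝ) + 1) ^ s

noncomputable def L' (x : ℝ) : ℝ := ∑' n : ℕ, x ^ n / ((n:ℝ) + 1)

lemma u_summable : Summable (fun n : ℕ => 1 / ((n:ℝ) + 1) ^ 2) := by
  have := Real.summable_one_div_nat_pow.mpr (le_refl 2)
  have h := (summable_nat_add_iff 1).mpr this
  simpa [add_comm] using h

lemma li_summable {x : ℝ} (hx : |x| ≤ 1) :
    Summable (fun n : ℕ => x ^ (n + 1) / ((n:ℝ) + 1) ^ 2) := by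
  refine Summable.of_norm_bounded u_summable (fun n => ?_)
  rw [Real.norm_eq_abs, abs_div, abs_pow, abs_of_pos (by positivity : (0:ℝ) < ((n:ℝ)+1)^2)]
  gcongr
  exact pow_le_one₀ (abs_nonneg x) hx

lemma li_hasSum {x : ℝ} (hx : |x| ≤ 1) :
    HasSum (fun n : ℕ => x ^ (n + 1) / ((n:ℝ) + 1) ^ 2) (Li 2 x) :=
  (li_summable hx).hasSum

lemma Li2_continuousOn : ContinuousOn (Li 2) (Icc (-1:ℝ) 1) := by
  have : ContinuousOn (fun x : ℝ => ∑' n : ℕ, x ^ (n + 1) / ((n:ℝ) + 1) ^ 2) (Icc (-1:ℝ) 1) := by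
    refine continuousOn_tsum (fun n => ?_) u_summable (fun n x hx => ?_)
    · exact (continuous_pow (n+1)).continuousOn.div_const _
    · rw [Real.norm_eq_abs, abs_div, abs_pow, abs_of_pos (by positivity : (0:ℝ) < ((n:ℝ)+1)^2)]
      gcongr
      exact pow_le_one₀ (abs_nonneg x) (abs_le.mpr ⟨hx.1, hx.2⟩)
  exact this

lemma Li2_hasDerivAt {x : ℝ} (hx : |x| < 1) : HasDerivAt (Li 2) (L' x) x := by
  set r : ℝ := (|x| + 1) / 2 with hr
  have hr0 : 0 ≤ r := by positivity
  have hr1 : r < 1 := by rw [hr]; linarith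
  have hxr : |x| < r := by rw [hr]; linarith
  have key : HasDerivAt (fun z : ℝ => ∑' n : ℕ, z ^ (n + 1) / ((n:ℝ) + 1) ^ 2)
      (∑' n : ℕ, x ^ n / ((n:ℝ) + 1)) x := by
    refine hasDerivAt_tsum_of_isPreconnected (u := fun n : ℕ => r ^ n)
      (g := fun (n : ℕ) (z : ℝ) => z ^ (n + 1) / ((n:ℝ) + 1) ^ 2)
      (summable_geometric_of_lt_one hr0 hr1) (isOpen_Ioo (a := -r) (b := r))
      (isPreconnected_Ioo) (g' := fun n y => y ^ n / ((n:ℝ) + 1))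
      (fun n y _ => ?_) (fun n y hy => ?_) (y₀ := 0) ?_ ?_ (abs_lt.mp hxr |> fun h => ⟨h.1, h.2⟩)
    · have h1 : HasDerivAt (fun z : ℝ => z ^ (n + 1)) (((n:ℝ) + 1) * y ^ n) y := by
        simpa using hasDerivAt_pow (n + 1) y
      have := h1.div_const (((n:ℝ) + 1) ^ 2)
      refine this.congr_deriv ?_
      have hn : ((n:ℝ) + 1) ≠ 0 := by positivity
      rw [div_eq_div_iff (by positivity) (by positivity)]
      ring
    · rw [Real.norm_eq_abs, abs_div, abs_pow, abs_of_pos (by positivity : (0:ℝ) < (n:ℝ)+1)]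
      have hyr : |y| ≤ r := by rw [abs_le]; exact ⟨hy.1.le, hy.2.le⟩
      calc |y| ^ n / ((n:ℝ) + 1) ≤ |y| ^ n / 1 := by gcongr; linarith
        _ = |y| ^ n := div_one _
        _ ≤ r ^ n := pow_le_pow_left₀ (abs_nonneg y) hyr n
    · exact ⟨neg_neg_iff_pos.mpr (by positivity), by positivity⟩
    · refine (summable_zero).congr (fun n => ?_)
      simp
  have : Li 2 = fun z : ℝ => ∑' n : ℕ, z ^ (n + 1) / ((n:ℝ) + 1) ^ 2 := rfl
  rw [this, L']
  exact key

lemma L'_zero : L' 0 = 1 := by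
  rw [L']
  rw [tsum_eq_single 0 (fun n hn => by
    simp [zero_pow hn])]
  simp

lemma L'_eq {x : ℝ} (hx : |x| < 1) (hx0 : x ≠ 0) : L' x = -Real.log (1 - x) / x := by
  have h := hasSum_pow_div_log_of_abs_lt_one hx
  have h2 := h.mul_left x⁻¹
  have : (fun n : ℕ => x⁻¹ * (x ^ (n + 1) / ((n:ℝ) + 1))) = fun n : ℕ => x ^ n / ((n:ℝ) + 1) := by
    funext n
    rw [pow_succ]
    field_simp
  rw [this] at h2
  rw [L', h2.tsum_eq]
  field_simp

lemma li_dup {x : ℝ} (hx : |x| ≤ 1) : Li 2 x + Li 2 (-x) = (1/2) * Li 2 (x^2) := by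
  have hx2 : |x^2| ≤ 1 := by rw [abs_pow]; exact pow_le_one₀ (abs_nonneg x) hx
  have hmx : |(-x)| ≤ 1 := by rwa [abs_neg]
  have h1 := (li_hasSum hx).add (li_hasSum hmx)
  -- h1 : HasSum (fun n => x^(n+1)/(n+1)^2 + (-x)^(n+1)/(n+1)^2) (Li 2 x + Li 2 (-x))
  have h2 := (li_hasSum hx2).mul_left (1/2)
  set f : ℕ → ℝ := fun n => x ^ (n + 1) / ((n:ℝ) + 1) ^ 2 + (-x) ^ (n + 1) / ((n:ℝ) + 1) ^ 2
  have he : HasSum (fun k : ℕ => f (2 * k)) 0 := by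
    have : (fun k : ℕ => f (2 * k)) = fun _ => (0:ℝ) := by
      funext k
      simp only [f]
      rw [Odd.neg_pow ⟨k, by ring⟩]
      ring
    rw [this]
    exact hasSum_zero
  have ho : HasSum (fun k : ℕ => f (2 * k + 1)) ((1/2) * Li 2 (x^2)) := by
    have heq : (fun k : ℕ => f (2 * k + 1))
        = fun k : ℕ => 1/2 * ((x^2) ^ (k + 1) / ((k:ℝ) + 1) ^ 2) := by
      funext k
      simp only [f]
      rw [Even.neg_pow ⟨k+1, by ring⟩, ← pow_mul]
      push_cast
      have : ((k:ℝ) + 1) ≠ 0 := by positivity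
      have : (2*(k:ℝ) + 1 + 1) ≠ 0 := by positivity
      field_simp
      ring
    rw [heq]
    exact h2
  have := he.even_add_odd ho
  rw [zero_add] at this
  exact h1.unique this

lemma basel : HasSum (fun n : ℕ => (1:ℝ) / ((n:ℝ) + 1) ^ 2) (π ^ 2 / 6) := by
  have h : HasSum (fun n : ℕ => (1:ℝ) / ((n + 1 : ℕ):ℝ) ^ 2) (π ^ 2 / 6) := by
    refine (hasSum_nat_add_iff (f := fun n : ℕ => (1:ℝ) / (n:ℝ) ^ 2) 1).mpr ?_
    simpa using hasSum_zeta_two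
  have : (fun n : ℕ => (1:ℝ) / ((n + 1 : ℕ):ℝ) ^ 2) = fun n : ℕ => (1:ℝ) / ((n:ℝ) + 1) ^ 2 := by
    funext n; push_cast; ring
  rwa [this] at h

lemma Li2_one : Li 2 1 = π ^ 2 / 6 := by
  rw [Li]
  have : (fun n : ℕ => (1:ℝ) ^ (n + 1) / ((n:ℝ) + 1) ^ 2)
      = fun n : ℕ => (1:ℝ) / ((n:ℝ) + 1) ^ 2 := by
    funext n; rw [one_pow]
  rw [this, basel.tsum_eq]

lemma Li2_zero : Li 2 0 = 0 := by
  rw [Li]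
  rw [tsum_eq_single 0 (fun n hn => by simp)]
  simp

lemma landen : ∀ x ∈ Icc (0:ℝ) (1/2),
    Li 2 (x / (x - 1)) + Li 2 x + (1/2) * (Real.log (1 - x)) ^ 2 = 0 := by
  set F : ℝ → ℝ := fun x => Li 2 (x / (x - 1)) + Li 2 x + (1/2) * (Real.log (1 - x)) ^ 2 with hF
  have key : ∀ x ∈ Icc (0:ℝ) (1/2), F x = F 0 := by
    apply constant_of_has_deriv_right_zero
    · -- continuity on Icc 0 (1/2)
      have hu : ContinuousOn (fun x : ℝ => x / (x - 1)) (Icc (0:ℝ) (1/2)) := by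
        exact continuousOn_id.div (continuousOn_id.sub continuousOn_const)
          (fun x hx => by intro h; nlinarith [hx.2, sub_eq_zero.mp (by simpa using h)])
      have hmaps : MapsTo (fun x : ℝ => x / (x - 1)) (Icc (0:ℝ) (1/2)) (Icc (-1:ℝ) 1) := by
        intro x hx
        have hd : x - 1 < 0 := by nlinarith [hx.2]
        constructor
        · rw [le_div_iff_of_neg hd]; nlinarith [hx.2]
        · have : x / (x - 1) ≤ 0 := div_nonpos_of_nonneg_of_nonpos hx.1 hd.le
          linarith
      refine ((Li2_continuousOn.comp hu hmaps).add
        (Li2_continuousOn.mono ?_)).add ?_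
      · intro x hx; exact ⟨by linarith [hx.1], by linarith [hx.2]⟩
      · have hlogc : ContinuousOn (fun x : ℝ => Real.log (1 - x)) (Icc (0:ℝ) (1/2)) := by
          refine ContinuousOn.log (continuousOn_const.sub continuousOn_id) ?_
          intro x hx
          have h1 : (0:ℝ) < 1 - x := by nlinarith [hx.2]
          simpa using h1.ne'
        exact continuousOn_const.mul (hlogc.pow 2)
    · -- zero derivative on Ico 0 (1/2)
      intro x hx
      have hx1 : (0:ℝ) ≤ x := hx.1
      have hx2 : x < 1/2 := hx.2
      have hd : x - 1 < 0 := by linarith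
      have hd' : x - 1 ≠ 0 := ne_of_lt hd
      have h1x : (0:ℝ) < 1 - x := by linarith
      set u : ℝ := x / (x - 1) with hu
      have hu_le : -1 < u := by
        rw [hu, lt_div_iff_of_neg hd]; nlinarith
      have hu_ge : u ≤ 0 := div_nonpos_of_nonneg_of_nonpos hx1 hd.le
      have huabs : |u| < 1 := abs_lt.mpr ⟨hu_le, by linarith⟩
      have hxabs : |x| < 1 := abs_lt.mpr ⟨by linarith, by linarith⟩
      -- derivative of inner map
      have hDu : HasDerivAt (fun x : ℝ => x / (x - 1)) (-1 / (x - 1) ^ 2) x := by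
        have := (hasDerivAt_id x).div ((hasDerivAt_id x).sub_const 1) hd'
        refine this.congr_deriv ?_
        simp only [id_eq]
        ring
      have h1 : HasDerivAt (fun x : ℝ => Li 2 (x / (x - 1))) (L' u * (-1 / (x - 1) ^ 2)) x :=
        by have := (Li2_hasDerivAt huabs).comp x hDu; exact this
      have h2 : HasDerivAt (Li 2) (L' x) x := Li2_hasDerivAt hxabs
      have h3 : HasDerivAt (fun x : ℝ => (1/2) * (Real.log (1 - x)) ^ 2)
          (Real.log (1 - x) * (-(1 - x)⁻¹)) x := by
        have hlog : HasDerivAt (fun x : ℝ => Real.log (1 - x)) ((1 - x)⁻¹ * (0 - 1)) x := by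
          exact (Real.hasDerivAt_log h1x.ne').comp x ((hasDerivAt_const x 1).sub (hasDerivAt_id x))
        have h4 := (hlog.pow 2).const_mul (1/2 : ℝ)
        refine h4.congr_deriv ?_
        norm_num
        ring
      have hsum := (h1.add h2).add h3
      have hzero : L' u * (-1 / (x - 1) ^ 2) + L' x
          + Real.log (1 - x) * (-(1 - x)⁻¹) = 0 := by
        rcases eq_or_ne x 0 with rfl | hx0
        · simp only [hu, zero_div] at *
          rw [L'_zero]
          norm_num
        · have hu0 : u ≠ 0 := by
            rw [hu]; exact div_ne_zero hx0 hd'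
          have h1u : 1 - u = 1 / (1 - x) := by
            rw [hu]; field_simp; ring
          have hlogu : Real.log (1 - u) = -Real.log (1 - x) := by
            rw [h1u, one_div, Real.log_inv]
          rw [L'_eq huabs hu0, L'_eq hxabs hx0, hlogu, hu]
          have hx0' : x ≠ 0 := hx0
          field_simp
          ring
      rw [hzero] at hsum
      exact hsum.hasDerivWithinAt
  intro x hx
  have h0 : F 0 = 0 := by
    simp only [hF]
    rw [zero_div, Li2_zero]
    simp
  show F x = 0
  rw [key x hx, h0]

theorem Li2_third :
    2 * Li 2 (1/3) - Li 2 (-(1/3))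
    = Real.pi ^ 2 / 6 - (1/2) * (Real.log 3) ^ 2 := by
  have h1 := landen (1/3) (by norm_num)
  have h2 := landen (1/4) (by norm_num)
  have h3 := landen (1/2) (by norm_num)
  have h4 := li_dup (x := 1/2) (by rw [abs_le]; norm_num)
  have h5 := li_dup (x := 1) (by rw [abs_le]; norm_num)
  norm_num at h1 h2 h3 h4 h5
  rw [Li2_one] at h5
  have l23 : Real.log (2/3) = Real.log 2 - Real.log 3 := Real.log_div (by norm_num) (by norm_num)
  have l34 : Real.log (3/4) = Real.log 3 - 2 * Real.log 2 := by
    rw [Real.log_div (by norm_num) (by norm_num)]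
    rw [show (4:ℝ) = 2^2 by norm_num, Real.log_pow]
    push_cast; ring
  have l12 : Real.log (1/2) = -Real.log 2 := by
    rw [one_div, Real.log_inv]
  rw [l23] at h1
  rw [l34] at h2
  rw [l12] at h3
  linear_combination 2*h1 - h2 + 2*h3 - 2*h4 - 2*h5
end
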